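/- Let (G, ω, μ) be a connected, locally finite weighted graph with a pseudo metric d whose balls are finite sets, let x₀ ∈ G, let V : G → ℝ with V > 0 on G, and let γ > 0. For each j ∈ ℕ let u_j : G → ℝ be the unique function with Δu_j(x) − V(x)u_j(x) = 0 for all x ∈ B_j(x₀) and u_j(x) = γ for all x ∈ G \ B_j(x₀). Then for every j ∈ ℕ one has 0 ≤ u_j(x) ≤ γ and u_{j+1}(x) ≤ u_j(x) for all x ∈ G. -/

import Mathlib

/-- Discrete maximum principle helper. -/
theorem maxprin13 {G : Type*} (ω : G → G → ℝ) (hω_nonneg : ∀ x y, 0 ≤ ω x y)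
    (S : Set G) (hS : S.Finite) (f : G → ℝ)
    (hout : ∀ x ∉ S, f x ≤ 0)
    (hin : ∀ x ∈ S, (∀ y, f y ≤ f x) → 0 < f x → 0 < ∑' y, ω x y * (f y - f x)) :
    ∀ x, f x ≤ 0 := by
  intro x
  by_contra hx
  push_neg at hx
  have hxS : x ∈ S := by
    by_contra h
    exact absurd (hout x h) (not_le.mpr hx)
  have hne : hS.toFinset.Nonempty := ⟨x, hS.mem_toFinset.mpr hxS⟩
  obtain ⟨z, hz, hzmax⟩ := hS.toFinset.exists_max_image f hne
  have hzS : z ∈ S := hS.mem_toFinset.mp hz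
  have hzpos : 0 < f z := lt_of_lt_of_le hx (hzmax x (hS.mem_toFinset.mpr hxS))
  have hglob : ∀ y, f y ≤ f z := by
    intro y
    by_cases hy : y ∈ S
    · exact hzmax y (hS.mem_toFinset.mpr hy)
    · exact (hout y hy).trans hzpos.le
  have h1 := hin z hzS hglob hzpos
  have h2 : ∑' y, ω z y * (f y - f z) ≤ 0 :=
    tsum_nonpos fun y =>
      mul_nonpos_iff.mpr (Or.inl ⟨hω_nonneg z y, sub_nonpos.mpr (hglob y)⟩)
  exact absurd h1 (not_lt.mpr h2)

/-- The Dirichlet approximations `u_j` (solving `Δu_j − V u_j = 0` in `B_j(x₀)` and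
`u_j = γ` outside) satisfy `0 ≤ u_j ≤ γ` and are pointwise non-increasing in `j`. -/
theorem stmt13 {G : Type*} [Countable G] [Infinite G]
    (μ : G → ℝ) (ω : G → G → ℝ) (d : G → G → ℝ)
    (hμ : ∀ x, 0 < μ x)
    (hω_symm : ∀ x y, ω x y = ω y x)
    (hω_diag : ∀ x, ω x x = 0)
    (hω_nonneg : ∀ x y, 0 ≤ ω x y)
    (hω_sum : ∀ x, Summable fun y => ω x y)
    (hloc : ∀ x : G, {y : G | 0 < ω x y}.Finite)
    (hconn : ∀ x y : G, x ≠ y → ∃ (n : ℕ) (p : ℕ → G),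
      p 0 = x ∧ p n = y ∧ ∀ i < n, 0 < ω (p i) (p (i + 1)))
    (hd_symm : ∀ x y, d x y = d y x)
    (hd_diag : ∀ x, d x x = 0)
    (hd_nonneg : ∀ x y, 0 ≤ d x y)
    (hd_tri : ∀ x y z, d x y ≤ d x z + d z y)
    (hballs : ∀ (x : G) (r : ℝ), {y : G | d y x < r}.Finite)
    (V : G → ℝ) (hV : ∀ x, 0 < V x)
    (x₀ : G) (γ : ℝ) (hγ : 0 < γ)
    (u : ℕ → G → ℝ)
    (hu_eq : ∀ (j : ℕ) (x : G), d x x₀ < (j : ℝ) →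
      (μ x)⁻¹ * (∑' y, ω x y * (u j y - u j x)) - V x * u j x = 0)
    (hu_bd : ∀ (j : ℕ) (x : G), ¬ d x x₀ < (j : ℝ) → u j x = γ) :
    ∀ (j : ℕ) (x : G), 0 ≤ u j x ∧ u j x ≤ γ ∧ u (j + 1) x ≤ u j x := by
  -- boundedness of each u k
  have hbdd : ∀ k : ℕ, ∃ C, ∀ y, |u k y| ≤ C := by
    intro k
    have hfin : (Set.range fun y => |u k y|).Finite := by
      apply Set.Finite.subset ((((hballs x₀ k).image (u k)).insert γ).image abs)
      rintro _ ⟨y, rfl⟩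
      by_cases hy : d y x₀ < (k : ℝ)
      · exact ⟨u k y, Set.mem_insert_of_mem _ ⟨y, hy, rfl⟩, rfl⟩
      · exact ⟨γ, Set.mem_insert _ _, by show |γ| = |u k y|; rw [hu_bd k y hy]⟩
    obtain ⟨C, hC⟩ := hfin.bddAbove
    exact ⟨C, fun y => hC ⟨y, rfl⟩⟩
  have hsum : ∀ (k : ℕ) (z : G), Summable fun y => ω z y * (u k y - u k z) := by
    intro k z
    obtain ⟨C, hC⟩ := hbdd k
    apply Summable.of_norm_bounded ((hω_sum z).mul_right (C + C))
    intro y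
    rw [Real.norm_eq_abs, abs_mul, abs_of_nonneg (hω_nonneg z y)]
    have h1 : |u k y - u k z| ≤ C + C := by
      calc |u k y - u k z| ≤ |u k y| + |u k z| := abs_sub _ _
        _ ≤ C + C := add_le_add (hC y) (hC z)
    exact mul_le_mul_of_nonneg_left h1 (hω_nonneg z y)
  -- restated equation
  have heq : ∀ (k : ℕ) (z : G), d z x₀ < (k : ℝ) →
      (∑' y, ω z y * (u k y - u k z)) = μ z * (V z * u k z) := by
    intro k z hz
    have h := hu_eq k z hz
    have hμz : μ z ≠ 0 := (hμ z).ne'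
    have h2 : (μ z)⁻¹ * (∑' y, ω z y * (u k y - u k z)) = V z * u k z := by linarith
    calc (∑' y, ω z y * (u k y - u k z))
        = μ z * ((μ z)⁻¹ * (∑' y, ω z y * (u k y - u k z))) := by
          field_simp
      _ = μ z * (V z * u k z) := by rw [h2]
  -- upper bound
  have hub : ∀ (k : ℕ) (z : G), u k z ≤ γ := by
    intro k
    have h := maxprin13 ω hω_nonneg {y | d y x₀ < (k : ℝ)} (hballs x₀ k)
      (fun y => u k y - γ)
      (by
        intro z hz
        simp only [Set.mem_setOf_eq] at hz
        show u k z - γ ≤ 0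
        rw [hu_bd k z hz]
        simp)
      (by
        intro z hz hmax hpos
        simp only [Set.mem_setOf_eq] at hz
        simp only [sub_sub_sub_cancel_right]
        rw [heq k z hz]
        have hu : 0 < u k z := by linarith
        exact mul_pos (hμ z) (mul_pos (hV z) hu))
    intro z
    have := h z
    linarith
  -- lower bound
  have hlb : ∀ (k : ℕ) (z : G), 0 ≤ u k z := by
    intro k
    have h := maxprin13 ω hω_nonneg {y | d y x₀ < (k : ℝ)} (hballs x₀ k)
      (fun y => - u k y)
      (by
        intro z hz
        simp only [Set.mem_setOf_eq] at hz
        show -u k z ≤ 0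
        rw [hu_bd k z hz]
        linarith)
      (by
        intro z hz hmax hpos
        simp only [Set.mem_setOf_eq] at hz
        have hrw : (fun y => ω z y * (-u k y - -u k z)) =
            fun y => -(ω z y * (u k y - u k z)) := by
          funext y; ring
        rw [show (∑' y, ω z y * ((fun y => - u k y) y - (fun y => - u k y) z))
              = ∑' y, -(ω z y * (u k y - u k z)) by exact congrArg tsum hrw,
          tsum_neg, heq k z hz]
        have hu : u k z < 0 := by linarith
        nlinarith [mul_pos (hμ z) (hV z)])
    intro z
    have := h z
    linarith
  -- monotonicity
  have hmono : ∀ (k : ℕ) (z : G), u (k + 1) z ≤ u k z := by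
    intro k
    have h := maxprin13 ω hω_nonneg {y | d y x₀ < ((k + 1 : ℕ) : ℝ)}
      (hballs x₀ ((k + 1 : ℕ) : ℝ))
      (fun y => u (k + 1) y - u k y)
      (by
        intro z hz
        simp only [Set.mem_setOf_eq] at hz
        have hzk : ¬ d z x₀ < (k : ℝ) := by
          intro h'
          apply hz
          push_cast
          linarith
        show u (k + 1) z - u k z ≤ 0
        rw [hu_bd (k + 1) z hz, hu_bd k z hzk]
        simp)
      (by
        intro z hz hmax hpos
        simp only [Set.mem_setOf_eq] at hz
        by_cases hzk : d z x₀ < (k : ℝ)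
        · have hrw : (fun y => ω z y * ((u (k + 1) y - u k y) - (u (k + 1) z - u k z))) =
              fun y => ω z y * (u (k + 1) y - u (k + 1) z) - ω z y * (u k y - u k z) := by
            funext y; ring
          rw [show (∑' y, ω z y * ((fun y => u (k + 1) y - u k y) y
                - (fun y => u (k + 1) y - u k y) z))
              = ∑' y, (ω z y * (u (k + 1) y - u (k + 1) z) - ω z y * (u k y - u k z))
              from congrArg tsum hrw,
            Summable.tsum_sub (hsum (k + 1) z) (hsum k z), heq (k + 1) z hz, heq k z hzk]
          have hpos' : 0 < u (k + 1) z - u k z := by linarith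
          nlinarith [mul_pos (hμ z) (hV z)]
        · exfalso
          have h1 : u k z = γ := hu_bd k z hzk
          have h2 := hub (k + 1) z
          linarith)
    intro z
    have := h z
    linarith
  intro j x
  exact ⟨hlb j x, hub j x, hmono j x⟩
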